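/- In the data center model, suppose that for all policies d and all j = 1,...,m, the quantity G^{(d)}(n,j) + c ≥ 0 (where G^{(d)}(n,j) = g^{(d)}(n,j−1) − g^{(d)}(n,j) and c = R − (P_{2,W}−P_{2,S})C_1/μ_2). Then for each fixed j and any policy d, the long-run average profit η^{d} is (weakly) increasing in the decision element d_{n,j} on {0,1,...,j}: if d' agrees with d except d'_{n,j} > d_{n,j} with both in {0,...,j}, then η^{d'} ≥ η^{d}, with strict inequality when G^{(d)}(n,j) + c > 0. -/

import Mathlib

open Finset

/-- Death rate of the data-center birth-death chain at state index `k`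
(states `0..n` are `(k,0)`; states `n+1..n+m` are `(n, k-n)`). -/
noncomputable def dcDeath (n : ℕ) (μ1 μ2 : ℝ) (d : ℕ → ℕ) (k : ℕ) : ℝ :=
  if k ≤ n then (k : ℝ) * μ1
  else (n : ℝ) * μ1 + (min (d (k - n)) (k - n) : ℝ) * μ2

/-- Policy-dependent generator of the data-center birth-death chain. -/
noncomputable def dcGen (n m : ℕ) (lam μ1 μ2 : ℝ) (d : ℕ → ℕ) (k l : ℕ) : ℝ :=
  if l = k + 1 then lam
  else if l + 1 = k then dcDeath n μ1 μ2 d k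
  else if l = k then -((if k < n + m then lam else 0) + dcDeath n μ1 μ2 d k)
  else 0

/-- `π` is a stationary probability vector for the policy-`d` chain. -/
def dcStationary (n m : ℕ) (lam μ1 μ2 : ℝ) (d : ℕ → ℕ) (π : ℕ → ℝ) : Prop :=
  (∀ l ∈ Finset.range (n + m + 1),
    ∑ k ∈ Finset.range (n + m + 1), π k * dcGen n m lam μ1 μ2 d k l = 0) ∧
  (∑ k ∈ Finset.range (n + m + 1), π k = 1) ∧
  (∀ k ∈ Finset.range (n + m + 1), 0 ≤ π k)

/-- Reward (profit rate) function of the data center at state index `k`. -/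
noncomputable def dcReward (n m : ℕ) (lam μ1 μ2 R P1W P2W P2S C1 C21 C22 C3 C4 : ℝ)
    (d : ℕ → ℕ) (k : ℕ) : ℝ :=
  if k ≤ n then
    R * ((k : ℝ) * μ1) - ((n : ℝ) * P1W + (m : ℝ) * P2S) * C1 - (k : ℝ) * C21
  else
    R * ((n : ℝ) * μ1 + (min (k - n) (d (k - n)) : ℝ) * μ2)
      - ((n : ℝ) * P1W + (d (k - n) : ℝ) * P2W + ((m : ℝ) - (d (k - n) : ℝ)) * P2S) * C1
      - ((n : ℝ) * C21 + ((k - n : ℕ) : ℝ) * C22)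
      - (n : ℝ) * μ1 * C3
      - (if k - n = m then lam * C4 else 0)

/-- `g` solves the Poisson equation `B^{(d)} g = η e - f` for the policy-`d` chain. -/
def dcPoisson (n m : ℕ) (lam μ1 μ2 : ℝ) (d : ℕ → ℕ) (f : ℕ → ℝ) (η : ℝ)
    (g : ℕ → ℝ) : Prop :=
  ∀ k ∈ Finset.range (n + m + 1),
    ∑ l ∈ Finset.range (n + m + 1), dcGen n m lam μ1 μ2 d k l * g l = η - f k

section Aux

variable (n m : ℕ) (lam μ1 μ2 : ℝ) (d : ℕ → ℕ)

lemma dcDeath_zero : dcDeath n μ1 μ2 d 0 = 0 := by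
  simp [dcDeath]

lemma dcDeath_pos (hn : 1 ≤ n) (hμ1 : 0 < μ1) (hμ2 : 0 < μ2) (k : ℕ) (hk : 1 ≤ k) :
    0 < dcDeath n μ1 μ2 d k := by
  unfold dcDeath
  split_ifs with h
  · have : (0:ℝ) < (k:ℝ) := by exact_mod_cast hk
    positivity
  · have h1 : (0:ℝ) < (n:ℝ) := by exact_mod_cast hn
    have h2 : (0:ℝ) ≤ min ((d (k - n) : ℕ) : ℝ) ((k : ℝ) - (n : ℝ)) * μ2 := by
      have hkn : ((n:ℝ)) ≤ (k:ℝ) := by exact_mod_cast Nat.le_of_lt (by omega)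
      have : (0:ℝ) ≤ min ((d (k - n) : ℕ) : ℝ) ((k : ℝ) - (n : ℝ)) :=
        le_min (by positivity) (by linarith)
      positivity
    have h3 := mul_pos h1 hμ1
    linarith

lemma dcGen_split (k l : ℕ) :
    dcGen n m lam μ1 μ2 d k l =
      (if l = k + 1 then lam else 0) +
      (if l + 1 = k then dcDeath n μ1 μ2 d k else 0) +
      (if l = k then -((if k < n + m then lam else 0) + dcDeath n μ1 μ2 d k) else 0) := by
  unfold dcGen
  split_ifs <;> first | ring1 | (exfalso; omega)

lemma dcColSum (π : ℕ → ℝ) (l : ℕ) (hl : l < n + m + 1) :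
    ∑ k ∈ Finset.range (n + m + 1), π k * dcGen n m lam μ1 μ2 d k l =
      (if 1 ≤ l then π (l - 1) * lam else 0)
      + (if l < n + m then π (l + 1) * dcDeath n μ1 μ2 d (l + 1) else 0)
      - π l * ((if l < n + m then lam else 0) + dcDeath n μ1 μ2 d l) := by
  have key : ∀ k, π k * dcGen n m lam μ1 μ2 d k l =
      (if k = l - 1 ∧ 1 ≤ l then π k * lam else 0)
      + (if k = l + 1 then π k * dcDeath n μ1 μ2 d k else 0)
      + (if k = l then -(π k * ((if k < n + m then lam else 0) + dcDeath n μ1 μ2 d k)) else 0) := by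
    intro k
    rw [dcGen_split]
    split_ifs <;> first | ring1 | (exfalso; omega)
  rw [Finset.sum_congr rfl (fun k _ => key k), Finset.sum_add_distrib, Finset.sum_add_distrib]
  have e1 : ∑ k ∈ Finset.range (n + m + 1), (if k = l - 1 ∧ 1 ≤ l then π k * lam else 0)
      = (if 1 ≤ l then π (l - 1) * lam else 0) := by
    by_cases h1 : 1 ≤ l
    · simp only [h1, and_true, if_true]
      rw [Finset.sum_ite_eq' (Finset.range (n + m + 1)) (l - 1) (fun k => π k * lam),
        if_pos (by simp [Finset.mem_range]; omega)]
    · simp [h1]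
  have e2 : ∑ k ∈ Finset.range (n + m + 1), (if k = l + 1 then π k * dcDeath n μ1 μ2 d k else 0)
      = (if l < n + m then π (l + 1) * dcDeath n μ1 μ2 d (l + 1) else 0) := by
    rw [Finset.sum_ite_eq' (Finset.range (n + m + 1)) (l + 1)
      (fun k => π k * dcDeath n μ1 μ2 d k)]
    by_cases h2 : l < n + m
    · rw [if_pos (by simp [Finset.mem_range]; omega), if_pos h2]
    · rw [if_neg (by simp [Finset.mem_range]; omega), if_neg h2]
  have e3 : ∑ k ∈ Finset.range (n + m + 1),
      (if k = l then -(π k * ((if k < n + m then lam else 0) + dcDeath n μ1 μ2 d k)) else 0)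
      = -(π l * ((if l < n + m then lam else 0) + dcDeath n μ1 μ2 d l)) := by
    rw [Finset.sum_ite_eq' (Finset.range (n + m + 1)) l
      (fun k => -(π k * ((if k < n + m then lam else 0) + dcDeath n μ1 μ2 d k))),
      if_pos (by simp [Finset.mem_range]; omega)]
  rw [e1, e2, e3]
  ring

lemma dcDetailedBalance (π : ℕ → ℝ) (hst : dcStationary n m lam μ1 μ2 d π) :
    ∀ l, l < n + m → π (l + 1) * dcDeath n μ1 μ2 d (l + 1) = π l * lam := by
  intro l
  induction l with
  | zero =>
    intro h0
    have h := hst.1 0 (by simp)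
    rw [dcColSum n m lam μ1 μ2 d π 0 (by omega)] at h
    simp only [show ¬ (1 ≤ 0) by omega, if_false, if_pos h0, dcDeath_zero] at h
    linarith
  | succ l ih =>
    intro hsl
    have hl : l < n + m := by omega
    have h := hst.1 (l + 1) (by simp [Finset.mem_range]; omega)
    rw [dcColSum n m lam μ1 μ2 d π (l + 1) (by omega)] at h
    simp only [show (1 ≤ l + 1) from by omega, if_true, Nat.add_sub_cancel, if_pos hsl] at h
    have := ih hl
    linarith

lemma dcStationary_pos (hn : 1 ≤ n) (hlam : 0 < lam) (hμ1 : 0 < μ1) (hμ2 : 0 < μ2)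
    (π : ℕ → ℝ) (hst : dcStationary n m lam μ1 μ2 d π) :
    ∀ k, k < n + m + 1 → 0 < π k := by
  have db := dcDetailedBalance n m lam μ1 μ2 d π hst
  have h0 : 0 < π 0 := by
    rcases lt_or_eq_of_le (hst.2.2 0 (by simp)) with h | h
    · exact h
    · exfalso
      have hz : ∀ l, l ≤ n + m → π l = 0 := by
        intro l
        induction l with
        | zero => intro _; exact h.symm
        | succ l ih =>
          intro hsl
          have h1 := db l (by omega)
          rw [ih (by omega), zero_mul] at h1
          have hd := dcDeath_pos n μ1 μ2 d hn hμ1 hμ2 (l + 1) (by omega)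
          have := mul_eq_zero.mp h1
          rcases this with h2 | h2
          · exact h2
          · exact absurd h2 (ne_of_gt hd)
      have : ∑ k ∈ Finset.range (n + m + 1), π k = 0 :=
        Finset.sum_eq_zero (fun k hk => hz k (by simp [Finset.mem_range] at hk; omega))
      rw [hst.2.1] at this
      norm_num at this
  intro k
  induction k with
  | zero => intro _; exact h0
  | succ k ih =>
    intro hk
    have hpk := ih (by omega)
    have h1 := db k (by omega)
    have hd := dcDeath_pos n μ1 μ2 d hn hμ1 hμ2 (k + 1) (by omega)
    by_contra hcon
    push_neg at hcon
    nlinarith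

end Aux

/-- if `G^{(d)}(n,j) + c ≥ 0` for all policies `d` and all
`j = 1,...,m`, then the long-run average profit is weakly increasing in each
decision element `d_{n,j}` on `{0,...,j}`, strictly when the sign is strict. -/
theorem stmt8 (n m : ℕ) (hn : 1 ≤ n) (hm : 1 ≤ m)
    (lam μ1 μ2 R P1W P2W P2S C1 C21 C22 C3 C4 : ℝ)
    (hlam : 0 < lam) (hμ1 : 0 < μ1) (hμ2 : 0 < μ2)
    (hP2S : 0 < P2S) (hP : P2S < P2W) (hC1 : 0 < C1)
    (π : (ℕ → ℕ) → ℕ → ℝ)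
    (hπ : ∀ d : ℕ → ℕ, (∀ j, d j ≤ m) → dcStationary n m lam μ1 μ2 d (π d))
    (η : (ℕ → ℕ) → ℝ)
    (hη : ∀ d : ℕ → ℕ, η d = ∑ k ∈ Finset.range (n + m + 1),
      π d k * dcReward n m lam μ1 μ2 R P1W P2W P2S C1 C21 C22 C3 C4 d k)
    (g : (ℕ → ℕ) → ℕ → ℝ)
    (hg : ∀ d : ℕ → ℕ, (∀ j, d j ≤ m) → dcPoisson n m lam μ1 μ2 d
      (dcReward n m lam μ1 μ2 R P1W P2W P2S C1 C21 C22 C3 C4 d) (η d) (g d))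
    (c : ℝ) (hc : c = R - (P2W - P2S) * C1 / μ2)
    (hsign : ∀ d : ℕ → ℕ, (∀ j, d j ≤ m) → ∀ j, 1 ≤ j → j ≤ m →
      0 ≤ (g d (n + j - 1) - g d (n + j)) + c) :
    ∀ (j0 : ℕ), 1 ≤ j0 → j0 ≤ m →
    ∀ d d' : ℕ → ℕ, (∀ j, d j ≤ m) → (∀ j, d' j ≤ m) →
      (∀ j, j ≠ j0 → d j = d' j) →
      d j0 < d' j0 → d' j0 ≤ j0 →
      η d ≤ η d' ∧
        (0 < (g d (n + j0 - 1) - g d (n + j0)) + c → η d < η d') := by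
  intro j0 hj1 hjm d d' hd hd' hagree hlt hle
  have hμ2ne : μ2 ≠ 0 := ne_of_gt hμ2
  have hstat' := hπ d' hd'
  have hpois := hg d hd
  have hdj : d j0 ≤ j0 := by omega
  have hk0mem : n + j0 ∈ Finset.range (n + m + 1) := by
    simp only [Finset.mem_range]; omega
  have hdd : ∀ k, k ≠ n + j0 → d (k - n) = d' (k - n) := by
    intro k hk
    exact hagree _ (by omega)
  have hGeq : ∀ k, k ≠ n + j0 → ∀ l,
      dcGen n m lam μ1 μ2 d' k l = dcGen n m lam μ1 μ2 d k l := by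
    intro k hk l
    unfold dcGen dcDeath
    rw [hdd k hk]
  have hfeq : ∀ k, k ≠ n + j0 →
      dcReward n m lam μ1 μ2 R P1W P2W P2S C1 C21 C22 C3 C4 d' k
        = dcReward n m lam μ1 μ2 R P1W P2W P2S C1 C21 C22 C3 C4 d k := by
    intro k hk
    unfold dcReward
    rw [hdd k hk]
  have hj0sub : n + j0 - n = j0 := by omega
  have hnk0 : ¬ (n + j0 ≤ n) := by omega
  have hcast : ((n + j0 : ℕ) : ℝ) - (n : ℝ) = (j0 : ℝ) := by push_cast; ring
  have hD : dcDeath n μ1 μ2 d (n + j0) = (n : ℝ) * μ1 + (d j0 : ℝ) * μ2 := by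
    unfold dcDeath
    rw [if_neg hnk0, hj0sub, hcast, min_eq_left (by exact_mod_cast hdj)]
  have hD' : dcDeath n μ1 μ2 d' (n + j0) = (n : ℝ) * μ1 + (d' j0 : ℝ) * μ2 := by
    unfold dcDeath
    rw [if_neg hnk0, hj0sub, hcast, min_eq_left (by exact_mod_cast hle)]
  have hGdiff : ∀ l, dcGen n m lam μ1 μ2 d' (n + j0) l - dcGen n m lam μ1 μ2 d (n + j0) l
      = (if l = n + j0 - 1 then ((d' j0 : ℝ) - (d j0 : ℝ)) * μ2 else 0)
        + (if l = n + j0 then -(((d' j0 : ℝ) - (d j0 : ℝ)) * μ2) else 0) := by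
    intro l
    unfold dcGen
    rw [hD, hD']
    split_ifs <;> first | ring1 | (exfalso; omega)
  have hInner : ∑ l ∈ Finset.range (n + m + 1), dcGen n m lam μ1 μ2 d' (n + j0) l * g d l
      - ∑ l ∈ Finset.range (n + m + 1), dcGen n m lam μ1 μ2 d (n + j0) l * g d l
      = ((d' j0 : ℝ) - (d j0 : ℝ)) * μ2 * (g d (n + j0 - 1) - g d (n + j0)) := by
    rw [← Finset.sum_sub_distrib]
    have key : ∀ l, dcGen n m lam μ1 μ2 d' (n + j0) l * g d l
        - dcGen n m lam μ1 μ2 d (n + j0) l * g d l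
        = (if l = n + j0 - 1 then ((d' j0 : ℝ) - (d j0 : ℝ)) * μ2 * g d l else 0)
          + (if l = n + j0 then -(((d' j0 : ℝ) - (d j0 : ℝ)) * μ2 * g d l) else 0) := by
      intro l
      rw [← sub_mul, hGdiff l]
      split_ifs <;> ring
    rw [Finset.sum_congr rfl (fun l _ => key l), Finset.sum_add_distrib,
      Finset.sum_ite_eq' (Finset.range (n + m + 1)) (n + j0 - 1)
        (fun l => ((d' j0 : ℝ) - (d j0 : ℝ)) * μ2 * g d l),
      Finset.sum_ite_eq' (Finset.range (n + m + 1)) (n + j0)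
        (fun l => -(((d' j0 : ℝ) - (d j0 : ℝ)) * μ2 * g d l)),
      if_pos (by simp only [Finset.mem_range]; omega), if_pos hk0mem]
    ring
  have hfdiff : dcReward n m lam μ1 μ2 R P1W P2W P2S C1 C21 C22 C3 C4 d' (n + j0)
      - dcReward n m lam μ1 μ2 R P1W P2W P2S C1 C21 C22 C3 C4 d (n + j0)
      = ((d' j0 : ℝ) - (d j0 : ℝ)) * μ2 * c := by
    unfold dcReward
    rw [if_neg hnk0, if_neg hnk0, hj0sub, hcast,
      min_eq_right (by exact_mod_cast hle), min_eq_right (by exact_mod_cast hdj), hc]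
    field_simp
    ring
  have keyA : ∑ k ∈ Finset.range (n + m + 1),
        π d' k * (∑ l ∈ Finset.range (n + m + 1), dcGen n m lam μ1 μ2 d k l * g d l)
      = η d - ∑ k ∈ Finset.range (n + m + 1),
          π d' k * dcReward n m lam μ1 μ2 R P1W P2W P2S C1 C21 C22 C3 C4 d k := by
    rw [Finset.sum_congr rfl (fun k hk => by rw [hpois k hk])]
    rw [Finset.sum_congr rfl (fun k _ => mul_sub (π d' k) _ _), Finset.sum_sub_distrib,
      ← Finset.sum_mul, hstat'.2.1, one_mul]
  have keyA' : ∑ k ∈ Finset.range (n + m + 1),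
        π d' k * (∑ l ∈ Finset.range (n + m + 1), dcGen n m lam μ1 μ2 d' k l * g d l)
      = 0 := by
    have swap : ∑ k ∈ Finset.range (n + m + 1),
          π d' k * (∑ l ∈ Finset.range (n + m + 1), dcGen n m lam μ1 μ2 d' k l * g d l)
        = ∑ l ∈ Finset.range (n + m + 1),
            (∑ k ∈ Finset.range (n + m + 1), π d' k * dcGen n m lam μ1 μ2 d' k l) * g d l := by
      simp only [Finset.mul_sum, Finset.sum_mul, mul_assoc]
      rw [Finset.sum_comm]
    rw [swap]
    exact Finset.sum_eq_zero fun l hl => by rw [hstat'.1 l hl, zero_mul]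
  have hDf : ∑ k ∈ Finset.range (n + m + 1),
        π d' k * dcReward n m lam μ1 μ2 R P1W P2W P2S C1 C21 C22 C3 C4 d' k
      - ∑ k ∈ Finset.range (n + m + 1),
          π d' k * dcReward n m lam μ1 μ2 R P1W P2W P2S C1 C21 C22 C3 C4 d k
      = π d' (n + j0) * (((d' j0 : ℝ) - (d j0 : ℝ)) * μ2 * c) := by
    rw [← Finset.sum_sub_distrib,
      Finset.sum_eq_single_of_mem (n + j0) hk0mem
        (fun k _ hkne => by rw [hfeq k hkne]; ring),
      ← mul_sub, hfdiff]
  have hBd : ∑ k ∈ Finset.range (n + m + 1),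
        π d' k * (∑ l ∈ Finset.range (n + m + 1), dcGen n m lam μ1 μ2 d' k l * g d l)
      - ∑ k ∈ Finset.range (n + m + 1),
          π d' k * (∑ l ∈ Finset.range (n + m + 1), dcGen n m lam μ1 μ2 d k l * g d l)
      = π d' (n + j0) * (((d' j0 : ℝ) - (d j0 : ℝ)) * μ2
          * (g d (n + j0 - 1) - g d (n + j0))) := by
    rw [← Finset.sum_sub_distrib,
      Finset.sum_eq_single_of_mem (n + j0) hk0mem
        (fun k _ hkne => by
          rw [Finset.sum_congr rfl (fun l _ => by rw [hGeq k hkne l])]; ring),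
      ← mul_sub, hInner]
  have main : η d' - η d = π d' (n + j0) *
      (((d' j0 : ℝ) - (d j0 : ℝ)) * μ2 * ((g d (n + j0 - 1) - g d (n + j0)) + c)) := by
    have e1 := hη d'
    linear_combination e1 + keyA + hDf + hBd - keyA'
  have hGc := hsign d hd j0 hj1 hjm
  have hppos : 0 < π d' (n + j0) :=
    dcStationary_pos n m lam μ1 μ2 d' hn hlam hμ1 hμ2 (π d') hstat' (n + j0) (by omega)
  have hΔpos : (0:ℝ) < (d' j0 : ℝ) - (d j0 : ℝ) := by
    have : (d j0 : ℝ) < (d' j0 : ℝ) := by exact_mod_cast hlt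
    linarith
  constructor
  · have h1 : 0 ≤ π d' (n + j0) *
        (((d' j0 : ℝ) - (d j0 : ℝ)) * μ2 * ((g d (n + j0 - 1) - g d (n + j0)) + c)) :=
      mul_nonneg hppos.le (mul_nonneg (mul_pos hΔpos hμ2).le hGc)
    linarith
  · intro hstrict
    have h1 : 0 < π d' (n + j0) *
        (((d' j0 : ℝ) - (d j0 : ℝ)) * μ2 * ((g d (n + j0 - 1) - g d (n + j0)) + c)) :=
      mul_pos hppos (mul_pos (mul_pos hΔpos hμ2) hstrict)
    linarith
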